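/- Let S be a spider graph with no legs of length 1, ℓ₂ legs of length 2, and ℓ₃ legs of length 3 (with ℓ₂+ℓ₃ ≥ 1). Then D(S,x) = x(2x+x²)^{ℓ₂}(2x+3x²+x³)^{ℓ₃} + (2x+x²)^{ℓ₂}(x+3x²+x³)^{ℓ₃} − x^{ℓ₂}(x+x²)^{ℓ₃}. -/

import Mathlib

open Polynomial

/-- A finite set of vertices dominates the graph. -/
def Dominates {V : Type*} (G : SimpleGraph V) (U : Finset V) : Prop :=
  ∀ v : V, v ∈ U ∨ ∃ u ∈ U, G.Adj u v

/-- The number of dominating sets of size `i`. -/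
noncomputable def domCount {V : Type*} [Fintype V] (G : SimpleGraph V) (i : ℕ) : ℕ :=
  Nat.card {U : Finset V // U.card = i ∧ Dominates G U}

/-- The domination polynomial. -/
noncomputable def domPoly {V : Type*} [Fintype V] (G : SimpleGraph V) : Polynomial ℤ :=
  ∑ i ∈ Finset.range (Fintype.card V + 1), Polynomial.C (domCount G i : ℤ) * Polynomial.X ^ i

/-- Vertices of the spider with `l1` legs of length 1, `l2` legs of length 2 and `l3` legs
of length 3: the center is `none`, and each leg vertex carries its leg and its position
along the leg (position `0` is the endpoint attached to the center). -/
abbrev SpiderV (l1 l2 l3 : ℕ) :=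
  Option ((Fin l1 × Fin 1) ⊕ (Fin l2 × Fin 2) ⊕ (Fin l3 × Fin 3))

/-- Consecutive vertices on a common leg. -/
def legRel {l1 l2 l3 : ℕ} :
    ((Fin l1 × Fin 1) ⊕ (Fin l2 × Fin 2) ⊕ (Fin l3 × Fin 3)) →
      ((Fin l1 × Fin 1) ⊕ (Fin l2 × Fin 2) ⊕ (Fin l3 × Fin 3)) → Prop
  | .inl (a, i), .inl (b, j) => a = b ∧ (i : ℕ) + 1 = (j : ℕ)
  | .inr (.inl (a, i)), .inr (.inl (b, j)) => a = b ∧ (i : ℕ) + 1 = (j : ℕ)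
  | .inr (.inr (a, i)), .inr (.inr (b, j)) => a = b ∧ (i : ℕ) + 1 = (j : ℕ)
  | _, _ => False

/-- The endpoint of a leg that is attached to the center. -/
def isLegEnd {l1 l2 l3 : ℕ} :
    ((Fin l1 × Fin 1) ⊕ (Fin l2 × Fin 2) ⊕ (Fin l3 × Fin 3)) → Prop
  | .inl (_, i) => (i : ℕ) = 0
  | .inr (.inl (_, i)) => (i : ℕ) = 0
  | .inr (.inr (_, i)) => (i : ℕ) = 0

/-- The asymmetric adjacency relation of the spider. -/
def spiderRel {l1 l2 l3 : ℕ} : SpiderV l1 l2 l3 → SpiderV l1 l2 l3 → Prop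
  | none, some x => isLegEnd x
  | some x, some y => legRel x y
  | _, _ => False

/-- The spider graph with `l1` legs of length 1, `l2` legs of length 2, `l3` legs of length 3. -/
def spider (l1 l2 l3 : ℕ) : SimpleGraph (SpiderV l1 l2 l3) :=
  SimpleGraph.fromRel spiderRel

/-! ### Auxiliary material -/

open Finset

open Classical in
lemma domPoly_eq_sum {V : Type*} [Fintype V] (G : SimpleGraph V) :
    domPoly G = ∑ U : Finset V, if Dominates G U then (X : Polynomial ℤ) ^ U.card else 0 := by
  have key : ∀ U : Finset V,
      (if Dominates G U then (X : Polynomial ℤ) ^ U.card else 0)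
        = ∑ i ∈ Finset.range (Fintype.card V + 1),
            if (U.card = i ∧ Dominates G U) then (X : Polynomial ℤ) ^ i else 0 := by
    intro U
    rw [Finset.sum_eq_single U.card]
    · simp
    · intro i _ hne
      rw [if_neg]; rintro ⟨h1, -⟩; exact hne h1.symm
    · intro hU
      exact absurd (Finset.mem_range.mpr (Nat.lt_succ_of_le
        (U.card_le_univ.trans_eq (by simp [Finset.card_univ])))) hU
  simp_rw [key]
  rw [Finset.sum_comm]
  unfold domPoly
  refine Finset.sum_congr rfl fun i _ => ?_
  rw [Finset.sum_ite, Finset.sum_const, Finset.sum_const_zero, add_zero, nsmul_eq_mul]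
  congr 1
  have : domCount G i
      = (Finset.univ.filter (fun U : Finset V => U.card = i ∧ Dominates G U)).card := by
    rw [domCount, Nat.card_eq_fintype_card, Fintype.card_subtype]
  rw [this]
  simp

lemma ite_pow_mul {p q : Prop} [Decidable p] [Decidable q] (m n : ℕ) :
    (if p ∧ q then (X : Polynomial ℤ) ^ (m + n) else 0)
      = (if p then (X : Polynomial ℤ) ^ m else 0) * (if q then (X : Polynomial ℤ) ^ n else 0) := by
  by_cases hp : p <;> by_cases hq : q <;> simp [hp, hq, pow_add]

lemma sum_fn (S : Type*) [Fintype S] (q : S → Prop) [DecidablePred q] (w : S → ℕ) :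
    ∀ l : ℕ,
      (∑ g : Fin l → S, if (∀ a, q (g a)) then (X : Polynomial ℤ) ^ (∑ a, w (g a)) else 0)
        = (∑ s : S, if q s then (X : Polynomial ℤ) ^ (w s) else 0) ^ l := by
  intro l
  induction l with
  | zero =>
    haveI : Unique (Fin 0 → S) := ⟨⟨fun i => i.elim0⟩, fun g => funext fun i => i.elim0⟩
    rw [Fintype.sum_unique]
    simp
  | succ n ih =>
    rw [← Equiv.sum_comp (Fin.consEquiv (fun _ : Fin (n+1) => S)), Fintype.sum_prod_type]
    have : ∀ (x : S) (g : Fin n → S),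
        (if (∀ a, q ((Fin.consEquiv (fun _ : Fin (n+1) => S)) (x, g) a)) then
            (X : Polynomial ℤ) ^ (∑ a, w ((Fin.consEquiv (fun _ : Fin (n+1) => S)) (x, g) a))
          else 0)
          = (if q x then (X : Polynomial ℤ) ^ (w x) else 0) *
              (if (∀ a, q (g a)) then (X : Polynomial ℤ) ^ (∑ a, w (g a)) else 0) := by
      intro x g
      rw [← ite_pow_mul]
      have h1 : (∀ a, q ((Fin.cons x g : Fin (n+1) → S) a)) ↔ (q x ∧ ∀ a, q (g a)) := by
        rw [Fin.forall_fin_succ]; simp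
      have h2 : (∑ a, w ((Fin.cons x g : Fin (n+1) → S) a)) = w x + ∑ a, w (g a) := by
        rw [Fin.sum_univ_succ]; simp
      simp only [Fin.consEquiv, Equiv.coe_fn_mk]
      simp only [h1]
      congr 1
      rw [h2]
    simp_rw [this, ← Finset.sum_mul_sum, ih, pow_succ]
    ring

lemma sum_pi_succ {M : Type*} [AddCommMonoid M] (n : ℕ) (h : (Fin (n + 1) → Bool) → M) :
    ∑ g : Fin (n + 1) → Bool, h g
      = ∑ x : Bool, ∑ g : Fin n → Bool, h (Fin.cons x g) := by
  rw [← Equiv.sum_comp (Fin.consEquiv fun _ => Bool) h, Fintype.sum_prod_type]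
  rfl

lemma sum_pi_zero {M : Type*} [AddCommMonoid M] (h : (Fin 0 → Bool) → M) :
    ∑ g : Fin 0 → Bool, h g = h (fun i => i.elim0) := by
  haveI : Unique (Fin 0 → Bool) := ⟨⟨fun i => i.elim0⟩, fun g => funext fun i => i.elim0⟩
  rw [Fintype.sum_unique]
  congr 1
  funext i
  exact i.elim0

lemma double_factor {α β : Type*} [Fintype α] [Fintype β] (c : Polynomial ℤ)
    (f : α → Polynomial ℤ) (g : β → Polynomial ℤ) :
    (∑ a : α, ∑ b : β, c * (f a * g b)) = c * ((∑ a, f a) * (∑ b, g b)) := by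
  have hin : ∀ a : α, (∑ b : β, c * (f a * g b)) = c * f a * ∑ b : β, g b := by
    intro a
    rw [Finset.mul_sum]
    exact Finset.sum_congr rfl fun b _ => by ring
  rw [Finset.sum_congr rfl fun a _ => hin a, ← Finset.sum_mul, ← Finset.mul_sum, mul_assoc]

section SpiderAux

variable {l2 l3 : ℕ}

def v2 (a : Fin l2) (i : Fin 2) : SpiderV 0 l2 l3 := some (.inr (.inl (a, i)))
def v3 (b : Fin l3) (i : Fin 3) : SpiderV 0 l2 l3 := some (.inr (.inr (b, i)))

lemma adj_none (u : SpiderV 0 l2 l3) :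
    (spider 0 l2 l3).Adj u none ↔ (∃ a, u = v2 a 0) ∨ (∃ b, u = v3 b 0) := by
  rcases u with _ | (⟨e, i⟩ | ⟨a, i⟩ | ⟨b, i⟩)
  · simp [spider, SimpleGraph.fromRel_adj, spiderRel, v2, v3]
  · exact e.elim0
  · simp only [spider, SimpleGraph.fromRel_adj, spiderRel, isLegEnd, v2, v3]
    constructor
    · rintro ⟨-, h | h⟩
      · exact h.elim
      · exact Or.inl ⟨a, by simp [show i = 0 from Fin.ext h]⟩
    · rintro (⟨a', h⟩ | ⟨b', h⟩)
      · simp only [Option.some.injEq, Sum.inr.injEq, Sum.inl.injEq, Prod.mk.injEq] at h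
        exact ⟨by simp, Or.inr (by simp [h.2])⟩
      · simp at h
  · simp only [spider, SimpleGraph.fromRel_adj, spiderRel, isLegEnd, v2, v3]
    constructor
    · rintro ⟨-, h | h⟩
      · exact h.elim
      · exact Or.inr ⟨b, by simp [show i = 0 from Fin.ext h]⟩
    · rintro (⟨a', h⟩ | ⟨b', h⟩)
      · simp at h
      · simp only [Option.some.injEq, Sum.inr.injEq, Prod.mk.injEq] at h
        exact ⟨by simp, Or.inr (by simp [h.2])⟩

lemma adj_v2 (u : SpiderV 0 l2 l3) (a : Fin l2) (i : Fin 2) :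
    (spider 0 l2 l3).Adj u (v2 a i) ↔
      (u = none ∧ i = 0) ∨ (u = v2 a 0 ∧ i = 1) ∨ (u = v2 a 1 ∧ i = 0) := by
  rcases u with _ | (⟨e, j⟩ | ⟨a', j⟩ | ⟨b', j⟩)
  · simp [spider, SimpleGraph.fromRel_adj, spiderRel, isLegEnd, v2]
  · exact e.elim0
  · simp only [spider, SimpleGraph.fromRel_adj, spiderRel, legRel, v2, Ne,
      Option.some.injEq, Sum.inr.injEq, Sum.inl.injEq, Prod.mk.injEq, reduceCtorEq]
    fin_cases i <;> fin_cases j <;> simp [Fin.ext_iff] <;> aesop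
  · simp [spider, SimpleGraph.fromRel_adj, spiderRel, legRel, v2, v3]

lemma adj_v3 (u : SpiderV 0 l2 l3) (b : Fin l3) (i : Fin 3) :
    (spider 0 l2 l3).Adj u (v3 b i) ↔
      (u = none ∧ i = 0) ∨ (u = v3 b 0 ∧ i = 1) ∨ (u = v3 b 1 ∧ (i = 0 ∨ i = 2))
        ∨ (u = v3 b 2 ∧ i = 1) := by
  rcases u with _ | (⟨e, j⟩ | ⟨a', j⟩ | ⟨b', j⟩)
  · simp [spider, SimpleGraph.fromRel_adj, spiderRel, isLegEnd, v3]
  · exact e.elim0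
  · simp [spider, SimpleGraph.fromRel_adj, spiderRel, legRel, v2, v3]
  · simp only [spider, SimpleGraph.fromRel_adj, spiderRel, legRel, v3, Ne,
      Option.some.injEq, Sum.inr.injEq, Prod.mk.injEq, reduceCtorEq]
    fin_cases i <;> fin_cases j <;> simp [Fin.ext_iff] <;> aesop

lemma dom_iff (U : Finset (SpiderV 0 l2 l3)) :
    Dominates (spider 0 l2 l3) U ↔
      ((none ∈ U ∨ (∃ a, v2 a 0 ∈ U) ∨ (∃ b, v3 b 0 ∈ U)) ∧
        (∀ a, (v2 a 0 ∈ U ∨ v2 a 1 ∈ U ∨ none ∈ U) ∧ (v2 a 1 ∈ U ∨ v2 a 0 ∈ U)) ∧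
        (∀ b, (v3 b 0 ∈ U ∨ v3 b 1 ∈ U ∨ none ∈ U) ∧ (v3 b 1 ∈ U ∨ v3 b 0 ∈ U ∨ v3 b 2 ∈ U)
          ∧ (v3 b 2 ∈ U ∨ v3 b 1 ∈ U))) := by
  constructor
  · intro H
    refine ⟨?_, fun a => ⟨?_, ?_⟩, fun b => ⟨?_, ?_, ?_⟩⟩
    · have := H none
      simp only [adj_none] at this
      rcases this with h | ⟨u, hu, (⟨a, rfl⟩ | ⟨b, rfl⟩)⟩
      · exact Or.inl h
      · exact Or.inr (Or.inl ⟨a, hu⟩)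
      · exact Or.inr (Or.inr ⟨b, hu⟩)
    · have := H (v2 a 0)
      simp only [adj_v2] at this
      rcases this with h | ⟨u, hu, (⟨rfl, -⟩ | ⟨rfl, h01⟩ | ⟨rfl, -⟩)⟩
      · tauto
      · tauto
      · exact absurd h01 (by decide)
      · tauto
    · have := H (v2 a 1)
      simp only [adj_v2] at this
      rcases this with h | ⟨u, hu, (⟨rfl, h10⟩ | ⟨rfl, -⟩ | ⟨rfl, h10⟩)⟩
      · tauto
      · exact absurd h10 (by decide)
      · tauto
      · exact absurd h10 (by decide)
    · have := H (v3 b 0)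
      simp only [adj_v3] at this
      rcases this with h | ⟨u, hu, (⟨rfl, -⟩ | ⟨rfl, h01⟩ | ⟨rfl, -⟩ | ⟨rfl, h01⟩)⟩
      · tauto
      · tauto
      · exact absurd h01 (by decide)
      · tauto
      · exact absurd h01 (by decide)
    · have := H (v3 b 1)
      simp only [adj_v3] at this
      rcases this with h | ⟨u, hu, (⟨rfl, h10⟩ | ⟨rfl, -⟩ | ⟨rfl, h⟩ | ⟨rfl, -⟩)⟩
      · tauto
      · exact absurd h10 (by decide)
      · tauto
      · exact absurd h (by decide)
      · tauto
    · have := H (v3 b 2)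
      simp only [adj_v3] at this
      rcases this with h | ⟨u, hu, (⟨rfl, h20⟩ | ⟨rfl, h21⟩ | ⟨rfl, h⟩ | ⟨rfl, h21⟩)⟩
      · tauto
      · exact absurd h20 (by decide)
      · exact absurd h21 (by decide)
      · rcases h with h | h
        · exact absurd h (by decide)
        · tauto
      · exact absurd h21 (by decide)
  · rintro ⟨h0, h2, h3⟩ v
    rcases v with _ | (⟨e, j⟩ | ⟨a, j⟩ | ⟨b, j⟩)
    · rcases h0 with h | ⟨a, ha⟩ | ⟨b, hb⟩
      · exact Or.inl h
      · exact Or.inr ⟨v2 a 0, ha, (adj_none _).mpr (Or.inl ⟨a, rfl⟩)⟩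
      · exact Or.inr ⟨v3 b 0, hb, (adj_none _).mpr (Or.inr ⟨b, rfl⟩)⟩
    · exact e.elim0
    · fin_cases j
      · rcases (h2 a).1 with h | h | h
        · exact Or.inl h
        · exact Or.inr ⟨v2 a 1, h, (adj_v2 _ _ _).mpr (Or.inr (Or.inr ⟨rfl, rfl⟩))⟩
        · exact Or.inr ⟨none, h, (adj_v2 _ _ _).mpr (Or.inl ⟨rfl, rfl⟩)⟩
      · rcases (h2 a).2 with h | h
        · exact Or.inl h
        · exact Or.inr ⟨v2 a 0, h, (adj_v2 _ _ _).mpr (Or.inr (Or.inl ⟨rfl, rfl⟩))⟩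
    · fin_cases j
      · rcases (h3 b).1 with h | h | h
        · exact Or.inl h
        · exact Or.inr ⟨v3 b 1, h,
            (adj_v3 _ _ _).mpr (Or.inr (Or.inr (Or.inl ⟨rfl, Or.inl rfl⟩)))⟩
        · exact Or.inr ⟨none, h, (adj_v3 _ _ _).mpr (Or.inl ⟨rfl, rfl⟩)⟩
      · rcases (h3 b).2.1 with h | h | h
        · exact Or.inl h
        · exact Or.inr ⟨v3 b 0, h, (adj_v3 _ _ _).mpr (Or.inr (Or.inl ⟨rfl, rfl⟩))⟩
        · exact Or.inr ⟨v3 b 2, h, (adj_v3 _ _ _).mpr (Or.inr (Or.inr (Or.inr ⟨rfl, rfl⟩)))⟩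
      · rcases (h3 b).2.2 with h | h
        · exact Or.inl h
        · exact Or.inr ⟨v3 b 1, h,
            (adj_v3 _ _ _).mpr (Or.inr (Or.inr (Or.inl ⟨rfl, Or.inr rfl⟩)))⟩

def memB (b : Bool) (g2 : Fin l2 → Fin 2 → Bool) (g3 : Fin l3 → Fin 3 → Bool) :
    SpiderV 0 l2 l3 → Bool
  | none => b
  | some (.inl p) => p.1.elim0
  | some (.inr (.inl (a, i))) => g2 a i
  | some (.inr (.inr (c, i))) => g3 c i

def Phi (t : Bool × (Fin l2 → Fin 2 → Bool) × (Fin l3 → Fin 3 → Bool)) :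
    Finset (SpiderV 0 l2 l3) :=
  univ.filter (fun v => memB t.1 t.2.1 t.2.2 v = true)

lemma mem_Phi (t) (v : SpiderV 0 l2 l3) : v ∈ Phi t ↔ memB t.1 t.2.1 t.2.2 v = true := by
  simp [Phi]

lemma mem_Phi_none (b g2 g3) : (none ∈ Phi (l2 := l2) (l3 := l3) (b, g2, g3)) ↔ b = true := by
  rw [mem_Phi]; rfl

lemma mem_Phi_v2 (b g2 g3) (a : Fin l2) (i : Fin 2) :
    (v2 (l3 := l3) a i ∈ Phi (b, g2, g3)) ↔ g2 a i = true := by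
  rw [mem_Phi]; rfl

lemma mem_Phi_v3 (b g2 g3) (c : Fin l3) (i : Fin 3) :
    (v3 (l2 := l2) c i ∈ Phi (b, g2, g3)) ↔ g3 c i = true := by
  rw [mem_Phi]; rfl

lemma Phi_bijective : Function.Bijective (Phi (l2 := l2) (l3 := l3)) := by
  constructor
  · rintro ⟨b, g2, g3⟩ ⟨b', g2', g3'⟩ h
    have hm : ∀ v, memB b g2 g3 v = memB b' g2' g3' v := by
      intro v
      have := Finset.ext_iff.mp h v
      rw [mem_Phi, mem_Phi] at this
      rcases hb : memB b g2 g3 v with _ | _ <;> rcases hb' : memB b' g2' g3' v with _ | _ <;>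
        simp_all
    refine Prod.ext ?_ (Prod.ext ?_ ?_)
    · exact hm none
    · funext a i; exact hm (v2 a i)
    · funext c i; exact hm (v3 c i)
  · intro U
    refine ⟨(decide (none ∈ U), fun a i => decide (v2 a i ∈ U),
      fun c i => decide (v3 c i ∈ U)), ?_⟩
    ext v
    rw [mem_Phi]
    rcases v with _ | (⟨e, j⟩ | ⟨a, j⟩ | ⟨c, j⟩)
    · simp [memB]
    · exact e.elim0
    · simp [memB, v2]
      exact ⟨of_decide_eq_true, decide_eq_true⟩
    · simp [memB, v3]
      exact ⟨of_decide_eq_true, decide_eq_true⟩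

def wB {n : ℕ} (s : Fin n → Bool) : ℕ := ∑ i, if s i = true then 1 else 0

lemma card_Phi (b : Bool) (g2 : Fin l2 → Fin 2 → Bool) (g3 : Fin l3 → Fin 3 → Bool) :
    (Phi (b, g2, g3)).card
      = (if b then 1 else 0) + ((∑ a, wB (g2 a)) + (∑ c, wB (g3 c))) := by
  rw [Phi, Finset.card_filter]
  rw [Fintype.sum_option, Fintype.sum_sum_type, Fintype.sum_sum_type]
  have he : (∑ p : Fin 0 × Fin 1, if memB b g2 g3 (some (.inl p)) = true then 1 else 0) = 0 := by
    simp
  rw [he, Fintype.sum_prod_type, Fintype.sum_prod_type]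
  simp [memB, wB, -Finset.sum_boole]
  rfl

abbrev q2 (s : Fin 2 → Bool) : Prop := s 1 = true ∨ s 0 = true
abbrev q3T (s : Fin 3 → Bool) : Prop := s 2 = true ∨ s 1 = true
abbrev q3F (s : Fin 3 → Bool) : Prop :=
  (s 0 = true ∨ s 1 = true) ∧ (s 1 = true ∨ s 0 = true ∨ s 2 = true) ∧ (s 2 = true ∨ s 1 = true)
abbrev n2 (s : Fin 2 → Bool) : Prop := ¬ s 0 = true ∧ q2 s
abbrev n3 (s : Fin 3 → Bool) : Prop := ¬ s 0 = true ∧ q3F s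

lemma legA2 : (∑ s : Fin 2 → Bool, if q2 s then (X : Polynomial ℤ) ^ (wB s) else 0)
    = 2 * X + X ^ 2 := by
  rw [sum_pi_succ]
  simp_rw [sum_pi_succ, sum_pi_zero, Fintype.sum_bool]
  simp only [q2, q3T, q3F, n2, n3, wB, Fin.sum_univ_succ, Fin.sum_univ_zero,
    show (1 : Fin 2) = Fin.succ 0 from rfl, Fin.cons_succ, Fin.cons_zero]
  norm_num
  ring

lemma legA3T : (∑ s : Fin 3 → Bool, if q3T s then (X : Polynomial ℤ) ^ (wB s) else 0)
    = 2 * X + 3 * X ^ 2 + X ^ 3 := by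
  rw [sum_pi_succ]
  simp_rw [sum_pi_succ, sum_pi_zero, Fintype.sum_bool]
  simp only [q2, q3T, q3F, n2, n3, wB, Fin.sum_univ_succ, Fin.sum_univ_zero,
    show (1 : Fin 3) = Fin.succ 0 from rfl, show (2 : Fin 3) = Fin.succ 1 from rfl,
    show (1 : Fin 2) = Fin.succ 0 from rfl, Fin.cons_succ, Fin.cons_zero]
  norm_num
  ring

lemma legA3F : (∑ s : Fin 3 → Bool, if q3F s then (X : Polynomial ℤ) ^ (wB s) else 0)
    = X + 3 * X ^ 2 + X ^ 3 := by
  rw [sum_pi_succ]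
  simp_rw [sum_pi_succ, sum_pi_zero, Fintype.sum_bool]
  simp only [q2, q3T, q3F, n2, n3, wB, Fin.sum_univ_succ, Fin.sum_univ_zero,
    show (1 : Fin 3) = Fin.succ 0 from rfl, show (2 : Fin 3) = Fin.succ 1 from rfl,
    show (1 : Fin 2) = Fin.succ 0 from rfl, Fin.cons_succ, Fin.cons_zero]
  norm_num
  ring

lemma legB2 : (∑ s : Fin 2 → Bool, if n2 s then (X : Polynomial ℤ) ^ (wB s) else 0) = X := by
  rw [sum_pi_succ]
  simp_rw [sum_pi_succ, sum_pi_zero, Fintype.sum_bool]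
  simp only [q2, q3T, q3F, n2, n3, wB, Fin.sum_univ_succ, Fin.sum_univ_zero,
    show (1 : Fin 2) = Fin.succ 0 from rfl, Fin.cons_succ, Fin.cons_zero]
  norm_num

lemma legB3 : (∑ s : Fin 3 → Bool, if n3 s then (X : Polynomial ℤ) ^ (wB s) else 0)
    = X + X ^ 2 := by
  rw [sum_pi_succ]
  simp_rw [sum_pi_succ, sum_pi_zero, Fintype.sum_bool]
  simp only [q2, q3T, q3F, n2, n3, wB, Fin.sum_univ_succ, Fin.sum_univ_zero,
    show (1 : Fin 3) = Fin.succ 0 from rfl, show (2 : Fin 3) = Fin.succ 1 from rfl,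
    show (1 : Fin 2) = Fin.succ 0 from rfl, Fin.cons_succ, Fin.cons_zero]
  norm_num
  ring

open Classical in
noncomputable def FF (b : Bool) (g2 : Fin l2 → Fin 2 → Bool) (g3 : Fin l3 → Fin 3 → Bool) :
    Polynomial ℤ :=
  if ((b = true ∨ (∃ a, g2 a 0 = true) ∨ (∃ c, g3 c 0 = true)) ∧
      (∀ a, (g2 a 0 = true ∨ g2 a 1 = true ∨ b = true) ∧ (g2 a 1 = true ∨ g2 a 0 = true)) ∧
      (∀ c, (g3 c 0 = true ∨ g3 c 1 = true ∨ b = true)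
        ∧ (g3 c 1 = true ∨ g3 c 0 = true ∨ g3 c 2 = true) ∧ (g3 c 2 = true ∨ g3 c 1 = true)))
  then (X : Polynomial ℤ) ^ ((if b then 1 else 0) + ((∑ a, wB (g2 a)) + (∑ c, wB (g3 c))))
  else 0

end SpiderAux

theorem domPoly_spider_nolegs1 (l2 l3 : ℕ) (h : 1 ≤ l2 + l3) :
    domPoly (spider 0 l2 l3) =
      X * (2 * X + X ^ 2) ^ l2 * (2 * X + 3 * X ^ 2 + X ^ 3) ^ l3
        + (2 * X + X ^ 2) ^ l2 * (X + 3 * X ^ 2 + X ^ 3) ^ l3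
        - X ^ l2 * (X + X ^ 2) ^ l3 := by
  classical
  rw [domPoly_eq_sum]
  have htrans := Fintype.sum_bijective (Phi (l2 := l2) (l3 := l3)) Phi_bijective
    (fun t => if Dominates (spider 0 l2 l3) (Phi t) then (X : Polynomial ℤ) ^ (Phi t).card else 0)
    (fun U => if Dominates (spider 0 l2 l3) U then (X : Polynomial ℤ) ^ U.card else 0)
    (fun t => rfl)
  rw [← htrans]
  have hF : ∀ t, (if Dominates (spider 0 l2 l3) (Phi t)
      then (X : Polynomial ℤ) ^ (Phi t).card else 0) = FF t.1 t.2.1 t.2.2 := by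
    rintro ⟨b, g2, g3⟩
    rw [card_Phi, FF]
    refine if_congr ?_ rfl rfl
    rw [dom_iff]
    simp only [mem_Phi_none, mem_Phi_v2, mem_Phi_v3]
  rw [Finset.sum_congr rfl (fun t _ => hF t)]
  rw [Fintype.sum_prod_type, Fintype.sum_bool]
  simp_rw [Fintype.sum_prod_type]
  have htrue : (∑ g2 : Fin l2 → Fin 2 → Bool, ∑ g3 : Fin l3 → Fin 3 → Bool, FF true g2 g3)
      = X * ((2 * X + X ^ 2) ^ l2 * (2 * X + 3 * X ^ 2 + X ^ 3) ^ l3) := by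
    have hp : ∀ (g2 : Fin l2 → Fin 2 → Bool) (g3 : Fin l3 → Fin 3 → Bool),
        FF true g2 g3 = X *
          ((if (∀ a, q2 (g2 a)) then (X : Polynomial ℤ) ^ (∑ a, wB (g2 a)) else 0)
            * (if (∀ c, q3T (g3 c)) then (X : Polynomial ℤ) ^ (∑ c, wB (g3 c)) else 0)) := by
      intro g2 g3
      rw [FF]
      have hiff : ((true = true ∨ (∃ a, g2 a 0 = true) ∨ (∃ c, g3 c 0 = true)) ∧
          (∀ a, (g2 a 0 = true ∨ g2 a 1 = true ∨ true = true)
            ∧ (g2 a 1 = true ∨ g2 a 0 = true)) ∧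
          (∀ c, (g3 c 0 = true ∨ g3 c 1 = true ∨ true = true)
            ∧ (g3 c 1 = true ∨ g3 c 0 = true ∨ g3 c 2 = true)
            ∧ (g3 c 2 = true ∨ g3 c 1 = true)))
          ↔ ((∀ a, q2 (g2 a)) ∧ (∀ c, q3T (g3 c))) := by
        constructor
        · rintro ⟨-, h2, h3⟩
          exact ⟨fun a => (h2 a).2, fun c => (h3 c).2.2⟩
        · rintro ⟨h2, h3⟩
          refine ⟨Or.inl rfl, fun a => ⟨Or.inr (Or.inr rfl), h2 a⟩,
            fun c => ⟨Or.inr (Or.inr rfl), ?_, h3 c⟩⟩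
          rcases h3 c with h | h
          · exact Or.inr (Or.inr h)
          · exact Or.inl h
      rw [if_congr hiff rfl rfl]
      by_cases hA : (∀ a, q2 (g2 a)) <;> by_cases hB : (∀ c, q3T (g3 c)) <;>
        simp [hA, hB, pow_add, if_pos, mul_assoc]
    rw [Finset.sum_congr rfl (fun g2 _ => Finset.sum_congr rfl (fun g3 _ => hp g2 g3))]
    rw [double_factor]
    rw [sum_fn (Fin 2 → Bool) q2 wB l2, sum_fn (Fin 3 → Bool) q3T wB l3, legA2, legA3T]
  have hfalse : (∑ g2 : Fin l2 → Fin 2 → Bool, ∑ g3 : Fin l3 → Fin 3 → Bool, FF false g2 g3)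
      = (2 * X + X ^ 2) ^ l2 * (X + 3 * X ^ 2 + X ^ 3) ^ l3 - X ^ l2 * (X + X ^ 2) ^ l3 := by
    have hp : ∀ (g2 : Fin l2 → Fin 2 → Bool) (g3 : Fin l3 → Fin 3 → Bool),
        FF false g2 g3 =
          ((if (∀ a, q2 (g2 a)) then (X : Polynomial ℤ) ^ (∑ a, wB (g2 a)) else 0)
            * (if (∀ c, q3F (g3 c)) then (X : Polynomial ℤ) ^ (∑ c, wB (g3 c)) else 0))
          - ((if (∀ a, n2 (g2 a)) then (X : Polynomial ℤ) ^ (∑ a, wB (g2 a)) else 0)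
            * (if (∀ c, n3 (g3 c)) then (X : Polynomial ℤ) ^ (∑ c, wB (g3 c)) else 0)) := by
      intro g2 g3
      rw [FF]
      set E : Prop := (∃ a, g2 a 0 = true) ∨ (∃ c, g3 c 0 = true) with hE
      have hiff : ((false = true ∨ (∃ a, g2 a 0 = true) ∨ (∃ c, g3 c 0 = true)) ∧
          (∀ a, (g2 a 0 = true ∨ g2 a 1 = true ∨ false = true)
            ∧ (g2 a 1 = true ∨ g2 a 0 = true)) ∧
          (∀ c, (g3 c 0 = true ∨ g3 c 1 = true ∨ false = true)
            ∧ (g3 c 1 = true ∨ g3 c 0 = true ∨ g3 c 2 = true)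
            ∧ (g3 c 2 = true ∨ g3 c 1 = true)))
          ↔ (E ∧ ((∀ a, q2 (g2 a)) ∧ (∀ c, q3F (g3 c)))) := by
        constructor
        · rintro ⟨hfe, h2, h3⟩
          refine ⟨?_, fun a => (h2 a).2, fun c => ⟨?_, (h3 c).2⟩⟩
          · rcases hfe with h | h
            · exact absurd h (by simp)
            · exact h
          · rcases (h3 c).1 with h | h | h
            · exact Or.inl h
            · exact Or.inr h
            · exact absurd h (by simp)
        · rintro ⟨he, h2, h3⟩
          refine ⟨Or.inr he, fun a => ⟨?_, h2 a⟩, fun c => ⟨?_, (h3 c).2⟩⟩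
          · rcases h2 a with h | h
            · exact Or.inr (Or.inl h)
            · exact Or.inl h
          · rcases (h3 c).1 with h | h
            · exact Or.inl h
            · exact Or.inr (Or.inl h)
      rw [if_congr hiff rfl rfl]
      have hsub : ∀ (R : Prop) [Decidable R] (x : Polynomial ℤ),
          (if E ∧ R then x else 0) = (if R then x else 0) - (if ¬E ∧ R then x else 0) := by
        intro R _ x
        by_cases hEe : E <;> by_cases hR : R <;> simp [hEe, hR]
      rw [hsub]
      have hneg : (¬E ∧ ((∀ a, q2 (g2 a)) ∧ (∀ c, q3F (g3 c))))
          ↔ ((∀ a, n2 (g2 a)) ∧ (∀ c, n3 (g3 c))) := by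
        rw [hE]
        push_neg
        constructor
        · rintro ⟨⟨hn2, hn3⟩, h2, h3⟩
          exact ⟨fun a => ⟨by simpa using hn2 a, h2 a⟩, fun c => ⟨by simpa using hn3 c, h3 c⟩⟩
        · rintro ⟨h2, h3⟩
          exact ⟨⟨fun a => by simpa using (h2 a).1, fun c => by simpa using (h3 c).1⟩,
            fun a => (h2 a).2, fun c => (h3 c).2⟩
      rw [if_congr hneg rfl rfl]
      simp only [show (if (false = true) then 1 else 0) = 0 from rfl, zero_add]
      congr 1
      · rw [← ite_pow_mul]
      · rw [← ite_pow_mul]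
    rw [Finset.sum_congr rfl (fun g2 _ => Finset.sum_congr rfl (fun g3 _ => hp g2 g3))]
    simp_rw [Finset.sum_sub_distrib]
    have hd1 := double_factor (α := Fin l2 → Fin 2 → Bool) (β := Fin l3 → Fin 3 → Bool)
      (1 : Polynomial ℤ)
      (fun g2 => if (∀ a, q2 (g2 a)) then (X : Polynomial ℤ) ^ (∑ a, wB (g2 a)) else 0)
      (fun g3 => if (∀ c, q3F (g3 c)) then (X : Polynomial ℤ) ^ (∑ c, wB (g3 c)) else 0)
    have hd2 := double_factor (α := Fin l2 → Fin 2 → Bool) (β := Fin l3 → Fin 3 → Bool)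
      (1 : Polynomial ℤ)
      (fun g2 => if (∀ a, n2 (g2 a)) then (X : Polynomial ℤ) ^ (∑ a, wB (g2 a)) else 0)
      (fun g3 => if (∀ c, n3 (g3 c)) then (X : Polynomial ℤ) ^ (∑ c, wB (g3 c)) else 0)
    simp only [one_mul] at hd1 hd2
    rw [hd1, hd2]
    rw [sum_fn (Fin 2 → Bool) q2 wB l2, sum_fn (Fin 3 → Bool) q3F wB l3,
      sum_fn (Fin 2 → Bool) n2 wB l2, sum_fn (Fin 3 → Bool) n3 wB l3,
      legA2, legA3F, legB2, legB3]
  rw [htrue, hfalse]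
  ring
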